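/- Continuity of the bilinear Stieltjes pairing under uniform convergence: Let tau > 0. Let f_n, f : [0, tau] -> [0, 1] be measurable functions with f continuous, and sup over [0,tau] of |f_n - f| -> 0. Let g_n, g : [0, tau] -> [0, 1] be nonincreasing right-continuous functions with g continuous and sup over [0,tau] of |g_n - g| -> 0. Then the Lebesgue–Stieltjes integrals converge: integral over (0, tau] of f_n dg_n -> integral over (0, tau] of f dg as n -> infinity. -/

import Mathlib

open MeasureTheory Filter Set Function Topology

/-- Per-interval estimate for a set integral against a constant approximation. -/
lemma stieltjes_step_est (ν : Measure ℝ) (F : ℝ → ℝ) (a b c C : ℝ)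
    (hν : ν (Set.Ioc a b) < ⊤)
    (hint : IntegrableOn F (Set.Ioc a b) ν)
    (hC : ∀ t ∈ Set.Ioc a b, |F t - c| ≤ C) :
    |(∫ t in Set.Ioc a b, F t ∂ν) - c * (ν (Set.Ioc a b)).toReal|
      ≤ C * (ν (Set.Ioc a b)).toReal := by
  have hconst : IntegrableOn (fun _ : ℝ => c) (Set.Ioc a b) ν := by
    have : IsFiniteMeasure (ν.restrict (Set.Ioc a b)) :=
      ⟨by rwa [Measure.restrict_apply_univ]⟩
    exact integrable_const c
  have h1 : (∫ t in Set.Ioc a b, F t ∂ν) - c * (ν (Set.Ioc a b)).toReal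
      = ∫ t in Set.Ioc a b, (F t - c) ∂ν := by
    rw [integral_sub hint hconst, setIntegral_const, smul_eq_mul, mul_comm, measureReal_def]
  rw [h1]
  have := norm_setIntegral_le_of_norm_le_const hν
    (f := fun t => F t - c) (C := C) (fun t ht => by simpa using hC t ht)
  rw [measureReal_def] at this
  simpa using this

lemma stieltjes_bdd_abs_diff (F H : ℝ → ℝ) (τ : ℝ)
    (hF : ∀ t ∈ Set.Icc (0:ℝ) τ, F t ∈ Set.Icc (0:ℝ) 1)
    (hH : ∀ t ∈ Set.Icc (0:ℝ) τ, H t ∈ Set.Icc (0:ℝ) 1) :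
    BddAbove (Set.range fun s : Set.Icc (0:ℝ) τ => |F s - H s|) := by
  refine ⟨2, ?_⟩
  rintro x ⟨s, rfl⟩
  show |F s.1 - H s.1| ≤ 2
  obtain ⟨h1, h2⟩ := hF s.1 s.2
  obtain ⟨h3, h4⟩ := hH s.1 s.2
  rw [abs_le]; exact ⟨by linarith, by linarith⟩

theorem stieltjes_pairing_continuity
    (τ : ℝ) (hτ : 0 < τ)
    (f : ℕ → ℝ → ℝ) (f₀ : ℝ → ℝ)
    (hfmeas : ∀ n, Measurable (f n))
    (hfrange : ∀ n, ∀ t ∈ Set.Icc 0 τ, f n t ∈ Set.Icc (0 : ℝ) 1)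
    (hf₀range : ∀ t ∈ Set.Icc 0 τ, f₀ t ∈ Set.Icc (0 : ℝ) 1)
    (hf₀cont : ContinuousOn f₀ (Set.Icc 0 τ))
    (hfconv : Tendsto (fun n => ⨆ t : Set.Icc (0 : ℝ) τ, |f n t - f₀ t|) atTop (𝓝 0))
    (g : ℕ → ℝ → ℝ) (g₀ : ℝ → ℝ)
    (hgmono : ∀ n, AntitoneOn (g n) (Set.Icc 0 τ))
    (hgrc : ∀ n, ∀ t ∈ Set.Ico 0 τ, ContinuousWithinAt (g n) (Set.Ici t) t)
    (hgrange : ∀ n, ∀ t ∈ Set.Icc 0 τ, g n t ∈ Set.Icc (0 : ℝ) 1)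
    (hg₀mono : AntitoneOn g₀ (Set.Icc 0 τ))
    (hg₀range : ∀ t ∈ Set.Icc 0 τ, g₀ t ∈ Set.Icc (0 : ℝ) 1)
    (hg₀cont : ContinuousOn g₀ (Set.Icc 0 τ))
    (hgconv : Tendsto (fun n => ⨆ t : Set.Icc (0 : ℝ) τ, |g n t - g₀ t|) atTop (𝓝 0))
    (μ : ℕ → Measure ℝ) (μ₀ : Measure ℝ)
    (hμ : ∀ n, ∀ a b : ℝ, a ∈ Set.Icc 0 τ → b ∈ Set.Icc 0 τ → a ≤ b →
      μ n (Set.Ioc a b) = ENNReal.ofReal (g n a - g n b))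
    (hμ₀ : ∀ a b : ℝ, a ∈ Set.Icc 0 τ → b ∈ Set.Icc 0 τ → a ≤ b →
      μ₀ (Set.Ioc a b) = ENNReal.ofReal (g₀ a - g₀ b)) :
    Tendsto (fun n => -∫ t in Set.Ioc (0 : ℝ) τ, f n t ∂(μ n)) atTop
      (𝓝 (-∫ t in Set.Ioc (0 : ℝ) τ, f₀ t ∂μ₀)) := by
  have h0mem : (0:ℝ) ∈ Set.Icc (0:ℝ) τ := ⟨le_refl 0, hτ.le⟩
  have hτmem : τ ∈ Set.Icc (0:ℝ) τ := ⟨hτ.le, le_refl τ⟩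
  -- pointwise bounds by the sup
  have hgub : ∀ n t, t ∈ Set.Icc (0:ℝ) τ →
      |g n t - g₀ t| ≤ ⨆ s : Set.Icc (0:ℝ) τ, |g n s - g₀ s| := fun n t ht =>
    le_ciSup (stieltjes_bdd_abs_diff (g n) g₀ τ (hgrange n) hg₀range) ⟨t, ht⟩
  have hfub : ∀ n t, t ∈ Set.Icc (0:ℝ) τ →
      |f n t - f₀ t| ≤ ⨆ s : Set.Icc (0:ℝ) τ, |f n s - f₀ s| := fun n t ht =>
    le_ciSup (stieltjes_bdd_abs_diff (f n) f₀ τ (hfrange n) hf₀range) ⟨t, ht⟩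
  -- pointwise convergence of g
  have hg_pt : ∀ t, t ∈ Set.Icc (0:ℝ) τ →
      Tendsto (fun n => g n t) atTop (𝓝 (g₀ t)) := by
    intro t ht
    rw [tendsto_iff_dist_tendsto_zero]
    refine squeeze_zero (fun n => dist_nonneg) (fun n => ?_) hgconv
    rw [Real.dist_eq]
    exact hgub n t ht
  -- finiteness of masses
  have hfin : ∀ n, μ n (Set.Ioc 0 τ) < ⊤ := fun n => by
    rw [hμ n 0 τ h0mem hτmem hτ.le]; exact ENNReal.ofReal_lt_top
  have hfin₀ : μ₀ (Set.Ioc 0 τ) < ⊤ := by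
    rw [hμ₀ 0 τ h0mem hτmem hτ.le]; exact ENNReal.ofReal_lt_top
  -- integrability
  have hint : ∀ n, IntegrableOn (f n) (Set.Ioc 0 τ) (μ n) := by
    intro n
    have : IsFiniteMeasure ((μ n).restrict (Set.Ioc 0 τ)) :=
      ⟨by rw [Measure.restrict_apply_univ]; exact hfin n⟩
    refine Integrable.mono' (integrable_const 1) (hfmeas n).aestronglyMeasurable ?_
    refine (ae_restrict_iff' measurableSet_Ioc).2 (ae_of_all _ fun t ht => ?_)
    obtain ⟨h1, h2⟩ := hfrange n t ⟨ht.1.le, ht.2⟩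
    rw [Real.norm_eq_abs, abs_le]; exact ⟨by linarith, h2⟩
  have hint₀ : IntegrableOn f₀ (Set.Ioc 0 τ) μ₀ := by
    have : IsFiniteMeasure (μ₀.restrict (Set.Ioc 0 τ)) :=
      ⟨by rw [Measure.restrict_apply_univ]; exact hfin₀⟩
    refine Integrable.mono' (integrable_const 1)
      ((hf₀cont.mono Set.Ioc_subset_Icc_self).aestronglyMeasurable measurableSet_Ioc) ?_
    refine (ae_restrict_iff' measurableSet_Ioc).2 (ae_of_all _ fun t ht => ?_)
    obtain ⟨h1, h2⟩ := hf₀range t ⟨ht.1.le, ht.2⟩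
    rw [Real.norm_eq_abs, abs_le]; exact ⟨by linarith, h2⟩
  have main : Tendsto (fun n => ∫ t in Set.Ioc (0:ℝ) τ, f n t ∂(μ n)) atTop
      (𝓝 (∫ t in Set.Ioc (0:ℝ) τ, f₀ t ∂μ₀)) := by
    rw [Metric.tendsto_atTop]
    intro ε hε
    have hε4 : 0 < ε/4 := by linarith
    obtain ⟨δ, hδ0, hδ⟩ := Metric.uniformContinuousOn_iff.1
      (isCompact_Icc.uniformContinuousOn_of_continuous hf₀cont) (ε/4) hε4
    obtain ⟨k, hk⟩ := exists_nat_gt (τ/δ)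
    have hk0 : 0 < (k:ℝ) := lt_trans (div_pos hτ hδ0) hk
    set p : ℕ → ℝ := fun i => (i:ℝ) * (τ/k) with hp
    have hp0 : p 0 = 0 := by simp [hp]
    have hpk : p k = τ := by
      simp only [hp]; field_simp
    have hpmono : Monotone p := fun i j hij =>
      mul_le_mul_of_nonneg_right (Nat.cast_le.2 hij) (by positivity)
    have hstep : ∀ i:ℕ, p (i+1) - p i = τ/k := by
      intro i; simp only [hp]; push_cast; ring
    have hτkδ : τ/k < δ := by
      rw [div_lt_iff₀ hk0]
      calc τ = (τ/δ)*δ := by field_simp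
        _ < k*δ := mul_lt_mul_of_pos_right hk hδ0
        _ = δ*k := mul_comm _ _
    have hpmem : ∀ i, i ≤ k → p i ∈ Set.Icc (0:ℝ) τ := fun i hi =>
      ⟨hp0 ▸ hpmono (Nat.zero_le i), hpk ▸ hpmono hi⟩
    -- partition of (0, τ]
    have hpart : Set.Ioc (0:ℝ) τ = ⋃ i ∈ Finset.range k, Set.Ioc (p i) (p (i+1)) := by
      have key : ∀ m:ℕ, Set.Ioc (p 0) (p m)
          = ⋃ i ∈ Finset.range m, Set.Ioc (p i) (p (i+1)) := by
        intro m
        induction m with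
        | zero => simp
        | succ m ih =>
          rw [Finset.range_add_one, Finset.set_biUnion_insert, ← ih, Set.union_comm,
            Set.Ioc_union_Ioc_eq_Ioc (hpmono (Nat.zero_le m)) (hpmono (Nat.le_succ m))]
      rw [← hp0, ← hpk, key]
    have hdisj : Set.Pairwise ↑(Finset.range k)
        (Disjoint on fun i => Set.Ioc (p i) (p (i+1))) := by
      intro i _ j _ hij
      rcases lt_or_gt_of_ne hij with h | h
      · exact Set.Ioc_disjoint_Ioc.2
          (le_trans (min_le_left _ _) (le_trans (hpmono h) (le_max_right _ _)))
      · exact Set.Ioc_disjoint_Ioc.2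
          (le_trans (min_le_right _ _) (le_trans (hpmono h) (le_max_left _ _)))
    have hsub : ∀ i, i < k → Set.Ioc (p i) (p (i+1)) ⊆ Set.Ioc (0:ℝ) τ := by
      intro i hi t ht
      exact ⟨lt_of_le_of_lt (hp0 ▸ hpmono (Nat.zero_le i)) ht.1,
        le_trans ht.2 (hpk ▸ hpmono hi)⟩
    set S : (ℝ → ℝ) → ℝ :=
      fun G => ∑ i ∈ Finset.range k, f₀ (p (i+1)) * (G (p i) - G (p (i+1))) with hSdef
    -- the generic estimate
    have key : ∀ (F : ℝ → ℝ) (ν : Measure ℝ) (G : ℝ → ℝ) (C : ℝ), 0 ≤ C →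
        (∀ i, i < k → ν (Set.Ioc (p i) (p (i+1)))
          = ENNReal.ofReal (G (p i) - G (p (i+1)))) →
        (∀ i, i < k → 0 ≤ G (p i) - G (p (i+1))) →
        G (p 0) - G (p k) ≤ 1 →
        IntegrableOn F (Set.Ioc 0 τ) ν →
        (∀ i, i < k → ∀ t ∈ Set.Ioc (p i) (p (i+1)), |F t - f₀ (p (i+1))| ≤ C) →
        |(∫ t in Set.Ioc (0:ℝ) τ, F t ∂ν) - S G| ≤ C := by
      intro F ν G C hC hform hGnn hG1 hFint hFC
      have hIsplit : (∫ t in Set.Ioc (0:ℝ) τ, F t ∂ν)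
          = ∑ i ∈ Finset.range k, ∫ t in Set.Ioc (p i) (p (i+1)), F t ∂ν := by
        rw [hpart]
        exact integral_biUnion_finset _ (fun i _ => measurableSet_Ioc) hdisj
          (fun i hi => hFint.mono_set (hsub i (Finset.mem_range.1 hi)))
      have hmeasval : ∀ i, i < k →
          (ν (Set.Ioc (p i) (p (i+1)))).toReal = G (p i) - G (p (i+1)) := by
        intro i hi; rw [hform i hi, ENNReal.toReal_ofReal (hGnn i hi)]
      calc |(∫ t in Set.Ioc (0:ℝ) τ, F t ∂ν) - S G|
          = |∑ i ∈ Finset.range k, ((∫ t in Set.Ioc (p i) (p (i+1)), F t ∂ν)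
              - f₀ (p (i+1)) * (G (p i) - G (p (i+1))))| := by
            rw [hIsplit, hSdef, Finset.sum_sub_distrib]
        _ ≤ ∑ i ∈ Finset.range k, |(∫ t in Set.Ioc (p i) (p (i+1)), F t ∂ν)
              - f₀ (p (i+1)) * (G (p i) - G (p (i+1)))| :=
            Finset.abs_sum_le_sum_abs _ _
        _ ≤ ∑ i ∈ Finset.range k, C * (G (p i) - G (p (i+1))) := by
            refine Finset.sum_le_sum fun i hi => ?_
            have hi' := Finset.mem_range.1 hi
            have h := stieltjes_step_est ν F (p i) (p (i+1)) (f₀ (p (i+1))) C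
              (by rw [hform i hi']; exact ENNReal.ofReal_lt_top)
              (hFint.mono_set (hsub i hi')) (hFC i hi')
            rwa [hmeasval i hi'] at h
        _ = C * (G (p 0) - G (p k)) := by
            rw [← Finset.mul_sum, Finset.sum_range_sub' (fun i => G (p i))]
        _ ≤ C * 1 := mul_le_mul_of_nonneg_left hG1 hC
        _ = C := mul_one C
    -- convergence of the Riemann-type sums
    have hS : Tendsto (fun n => S (g n)) atTop (𝓝 (S g₀)) := by
      refine tendsto_finset_sum _ fun i hi => ?_
      have hi' := Finset.mem_range.1 hi
      exact ((hg_pt (p i) (hpmem i hi'.le)).sub (hg_pt (p (i+1)) (hpmem (i+1) hi'))).const_mul _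
    obtain ⟨N2, hN2⟩ := (Metric.tendsto_atTop.1 hS) (ε/4) hε4
    have hev1 := hfconv.eventually_lt_const hε4
    obtain ⟨N1, hN1⟩ := eventually_atTop.1 hev1
    refine ⟨max N1 N2, fun n hn => ?_⟩
    have hn1 := hN1 n (le_trans (le_max_left _ _) hn)
    have hn2 := hN2 n (le_trans (le_max_right _ _) hn)
    set sn := ⨆ s : Set.Icc (0:ℝ) τ, |f n s - f₀ s| with hsn
    have hsn0 : 0 ≤ sn := le_trans (abs_nonneg _) (hfub n 0 h0mem)
    -- bound for g n data
    have hG1n : g n (p 0) - g n (p k) ≤ 1 := by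
      rw [hp0, hpk]
      obtain ⟨h1, h2⟩ := hgrange n 0 h0mem
      obtain ⟨h3, h4⟩ := hgrange n τ hτmem
      linarith
    have hG10 : g₀ (p 0) - g₀ (p k) ≤ 1 := by
      rw [hp0, hpk]
      obtain ⟨h1, h2⟩ := hg₀range 0 h0mem
      obtain ⟨h3, h4⟩ := hg₀range τ hτmem
      linarith
    have hoscl : ∀ i, i < k → ∀ t ∈ Set.Ioc (p i) (p (i+1)),
        |f₀ t - f₀ (p (i+1))| < ε/4 := by
      intro i hi t ht
      have htmem : t ∈ Set.Icc (0:ℝ) τ := ⟨(hsub i hi ht).1.le, (hsub i hi ht).2⟩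
      have hdist : dist t (p (i+1)) < δ := by
        rw [Real.dist_eq, abs_sub_comm, abs_of_nonneg (sub_nonneg.2 ht.2)]
        have : p (i+1) - t < p (i+1) - p i := by linarith [ht.1]
        rw [hstep i] at this
        exact lt_trans this hτkδ
      have := hδ t htmem (p (i+1)) (hpmem (i+1) hi) hdist
      rwa [Real.dist_eq] at this
    have bound1 : |(∫ t in Set.Ioc (0:ℝ) τ, f n t ∂(μ n)) - S (g n)| ≤ sn + ε/4 := by
      refine key (f n) (μ n) (g n) (sn + ε/4) (by linarith)
        (fun i hi => hμ n (p i) (p (i+1)) (hpmem i hi.le) (hpmem (i+1) hi)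
          (hpmono (Nat.le_succ i)))
        (fun i hi => sub_nonneg.2 (hgmono n (hpmem i hi.le) (hpmem (i+1) hi)
          (hpmono (Nat.le_succ i))))
        hG1n (hint n) (fun i hi t ht => ?_)
      have htmem : t ∈ Set.Icc (0:ℝ) τ := ⟨(hsub i hi ht).1.le, (hsub i hi ht).2⟩
      have h1 : |f n t - f₀ t| ≤ sn := hfub n t htmem
      have h2 : |f₀ t - f₀ (p (i+1))| < ε/4 := hoscl i hi t ht
      calc |f n t - f₀ (p (i+1))| ≤ |f n t - f₀ t| + |f₀ t - f₀ (p (i+1))| :=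
            abs_sub_le _ _ _
        _ ≤ sn + ε/4 := by linarith
    have bound0 : |(∫ t in Set.Ioc (0:ℝ) τ, f₀ t ∂μ₀) - S g₀| ≤ ε/4 := by
      refine key f₀ μ₀ g₀ (ε/4) hε4.le
        (fun i hi => hμ₀ (p i) (p (i+1)) (hpmem i hi.le) (hpmem (i+1) hi)
          (hpmono (Nat.le_succ i)))
        (fun i hi => sub_nonneg.2 (hg₀mono (hpmem i hi.le) (hpmem (i+1) hi)
          (hpmono (Nat.le_succ i))))
        hG10 hint₀ (fun i hi t ht => (hoscl i hi t ht).le)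
    rw [Real.dist_eq] at hn2 ⊢
    have t1 : |(∫ t in Set.Ioc (0:ℝ) τ, f n t ∂(μ n))
        - (∫ t in Set.Ioc (0:ℝ) τ, f₀ t ∂μ₀)|
        ≤ |(∫ t in Set.Ioc (0:ℝ) τ, f n t ∂(μ n)) - S (g n)|
          + |S (g n) - (∫ t in Set.Ioc (0:ℝ) τ, f₀ t ∂μ₀)| := abs_sub_le _ _ _
    have t2 : |S (g n) - (∫ t in Set.Ioc (0:ℝ) τ, f₀ t ∂μ₀)|
        ≤ |S (g n) - S g₀| + |S g₀ - (∫ t in Set.Ioc (0:ℝ) τ, f₀ t ∂μ₀)| :=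
      abs_sub_le _ _ _
    have t3 : |S g₀ - (∫ t in Set.Ioc (0:ℝ) τ, f₀ t ∂μ₀)|
        = |(∫ t in Set.Ioc (0:ℝ) τ, f₀ t ∂μ₀) - S g₀| := abs_sub_comm _ _
    linarith
  exact main.neg
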